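/- For all integers m and t, the identity (36t³ - 36t² + 12t + m)³ + (36t³ - 36t² + 12t + m - 2)³ + 2(-36t³ + 36t² - 12t - m + 1)³ + (-6t + 2)³ = 6m + 2 holds. -/
import Mathlib


theorem stmt16 (m t : ℤ) :
    (36*t^3 - 36*t^2 + 12*t + m)^3 + (36*t^3 - 36*t^2 + 12*t + m - 2)^3
    + 2*(-36*t^3 + 36*t^2 - 12*t - m + 1)^3 + (-6*t + 2)^3 = 6*m + 2 := by ring
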